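/- Let G = PGL(2, F_q((t^{-1}))), Γ = PGL(2, F_q[t]), and W = PGL(2, F_q[[t^{-1}]]). Then G is the disjoint union over i ≥ 0 of the double cosets Γ · diag(t^i, 1) · W. -/

import Mathlib

open scoped OnePoint
open Polynomial

noncomputable section

attribute [local instance] Classical.propDecidable

/-- The field `K = F((t⁻¹))` of formal Laurent series in `t⁻¹`, modeled as
Laurent series in a variable `X = t⁻¹`. -/
abbrev K (F : Type) [Field F] := LaurentSeries F

/-- The element `t ∈ K`, i.e. `X⁻¹` where `X = t⁻¹`. -/
def tK (F : Type) [Field F] : K F := HahnSeries.single (-1 : ℤ) (1 : F)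

variable {F : Type} [Field F]

/-- The degree of a Laurent series in `t⁻¹`, as an exponent of `t`
(junk value `0` for `α = 0`). -/
def deg (α : K F) : ℤ := -α.order

/-- The leading coefficient of a Laurent series in `t⁻¹`. -/
def leadCoeff (α : K F) : F := α.coeff α.order

/-- Degree with the conventions `deg 0 = -∞`, valued in `WithBot (WithTop ℤ)`. -/
def degK (α : K F) : WithBot (WithTop ℤ) :=
  if α = 0 then ⊥ else (((deg α : ℤ) : WithTop ℤ) : WithBot (WithTop ℤ))

/-- Embedding of integers into the degree value type. -/
def zdeg (n : ℤ) : WithBot (WithTop ℤ) := ((n : WithTop ℤ) : WithBot (WithTop ℤ))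

/-- Degree on the projective line, with `deg ∞ = +∞`. -/
def degP : OnePoint (K F) → WithBot (WithTop ℤ) := fun x =>
  Option.elim x ((⊤ : WithTop ℤ) : WithBot (WithTop ℤ)) degK

/-- The polynomial subring `Z = F[t]` of `K`. -/
def Zsub (F : Type) [Field F] : Subalgebra F (K F) := Algebra.adjoin F {tK F}

/-- The set `t⁻¹ F[[t⁻¹]]` of fractional parts: series with only negative powers of `t`. -/
def FracSet (F : Type) [Field F] : Set (K F) := {f | ∀ i : ℤ, i ≤ 0 → f.coeff i = 0}

/-- Membership in the ring of integers `O = F[[t⁻¹]]`. -/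
def InO (α : K F) : Prop := ∀ i : ℤ, i < 0 → α.coeff i = 0

section Mobius

variable {R : Type} [Field R]

/-- The Möbius transformation of `P¹(R)` attached to the matrix `[[a,b],[c,d]]`. -/
def rawMob (a b c d : R) : OnePoint R → OnePoint R := fun x =>
  Option.elim x (if c = 0 then ∞ else ((a / c : R) : OnePoint R))
    (fun y => if c * y + d = 0 then ∞ else (((a * y + b) / (c * y + d) : R) : OnePoint R))

/-- The Möbius action of `GL(2,R)` on `P¹(R)`. -/
def mobius (g : GL (Fin 2) R) : OnePoint R → OnePoint R :=
  rawMob (g.val 0 0) (g.val 0 1) (g.val 1 0) (g.val 1 1)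

/-- The diagonal Möbius action on ordered triples. -/
def mob3 (g : GL (Fin 2) R) (w : OnePoint R × OnePoint R × OnePoint R) :
    OnePoint R × OnePoint R × OnePoint R :=
  (mobius g w.1, mobius g w.2.1, mobius g w.2.2)

/-- The triple is mutually distinct. -/
def Dist3 (w : OnePoint R × OnePoint R × OnePoint R) : Prop :=
  w.1 ≠ w.2.1 ∧ w.1 ≠ w.2.2 ∧ w.2.1 ≠ w.2.2

/-- The map `ω ↦ 1/ω` on `P¹(R)`. -/
def invP : OnePoint R → OnePoint R := fun x =>
  Option.elim x (((0 : R) : OnePoint R)) (fun y => if y = 0 then ∞ else ((y⁻¹ : R) : OnePoint R))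

end Mobius

/-- `γ` is (a representative in `GL(2,K)` of an element of) `Γ = PGL(2, F[t])`:
entries are polynomials in `t` and the determinant is a nonzero constant. -/
def InGammaRep (γ : GL (Fin 2) (K F)) : Prop :=
  (∀ i j, γ.val i j ∈ Zsub F) ∧ ∃ c : F, c ≠ 0 ∧ γ.val.det = algebraMap F (K F) c

/-- `w` is (a representative in `GL(2,K)` of an element of) `W = PGL(2, F[[t⁻¹]])`:
entries are integral and the determinant is a unit of `F[[t⁻¹]]`. -/
def InWRep (w : GL (Fin 2) (K F)) : Prop :=
  (∀ i j, InO (w.val i j)) ∧ (w.val.det).coeff 0 ≠ 0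

/-- The space of ordered triples of points of `P¹(K)`. -/
abbrev T3 (F : Type) [Field F] := OnePoint (K F) × OnePoint (K F) × OnePoint (K F)

/-- `S₀`: the leading coefficient of `ω₂` is `1`. -/
def S0 (F : Type) [Field F] : Set (T3 F) :=
  {w | ∃ β : K F, w.2.1 = (β : OnePoint (K F)) ∧ leadCoeff β = 1}

/-- `S₁`: `deg ω₁ < 0 < deg ω₃`. -/
def S1 (F : Type) [Field F] : Set (T3 F) :=
  {w | degP w.1 < zdeg 0 ∧ zdeg 0 < degP w.2.2}

/-- `S₂`: `deg ω₁ ≠ deg ω₂` and `deg ω₂ < deg ω₃`. -/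
def S2 (F : Type) [Field F] : Set (T3 F) :=
  {w | degP w.1 ≠ degP w.2.1 ∧ degP w.2.1 < degP w.2.2}

/-- `S₃`: `deg ω₁ = deg ω₂ = deg (ω₁ - ω₂)`. -/
def S3 (F : Type) [Field F] : Set (T3 F) :=
  {w | ∃ α β : K F, w.1 = (α : OnePoint (K F)) ∧ w.2.1 = (β : OnePoint (K F)) ∧
    degK α = degK β ∧ degK β = degK (α - β)}

end
noncomputable section CartanAux
namespace CartanAux
open HahnSeries

set_option maxHeartbeats 1600000
set_option synthInstance.maxHeartbeats 1000000

variable {F : Type} [Field F]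

/-- `t^n` for `n : ℤ`. -/
def T (F : Type) [Field F] (n : ℤ) : K F := HahnSeries.single (-n) (1 : F)

lemma T_ne_zero (n : ℤ) : T F n ≠ 0 := single_ne_zero one_ne_zero

lemma T_mul (a b : ℤ) : T F a * T F b = T F (a + b) := by
  rw [T, T, T, single_mul_single, one_mul, neg_add]

lemma T_zero : T F 0 = 1 := by
  ext i; simp [T, HahnSeries.coeff_single, HahnSeries.coeff_one, eq_comm]

lemma order_T (n : ℤ) : (T F n).order = -n := order_single one_ne_zero

lemma tK_pow (k : ℕ) : (tK F) ^ k = T F k := by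
  rw [tK, single_pow, T]
  congr 1
  · simp
  · exact one_pow k

lemma T_mul_T_neg (n : ℤ) : T F n * T F (-n) = 1 := by
  rw [T_mul, add_neg_cancel, T_zero]

lemma order_inv {x : K F} (hx : x ≠ 0) : x⁻¹.order = -x.order := by
  have h1 : x * x⁻¹ = 1 := mul_inv_cancel₀ hx
  have h2 : (x * x⁻¹).order = x.order + x⁻¹.order :=
    order_mul hx (inv_ne_zero hx)
  rw [h1, order_one] at h2
  omega

lemma order_nonneg_of_inO {x : K F} (h : InO x) (hx : x ≠ 0) : 0 ≤ x.order := by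
  by_contra hlt
  exact (mt coeff_order_eq_zero.mp hx) (h _ (by omega))

lemma inO_of_order_nonneg {x : K F} (h : 0 ≤ x.order) : InO x :=
  fun i hi => coeff_eq_zero_of_lt_order (by omega)

lemma inO_zero : InO (0 : K F) := fun i _ => rfl

lemma inO_one : InO (1 : K F) := inO_of_order_nonneg (le_of_eq order_one.symm)

lemma inO_add {x y : K F} (hx : InO x) (hy : InO y) : InO (x + y) := fun i hi => by
  rw [HahnSeries.coeff_add, hx i hi, hy i hi, add_zero]

lemma inO_neg {x : K F} (hx : InO x) : InO (-x) := fun i hi => by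
  rw [HahnSeries.coeff_neg, hx i hi, neg_zero]

lemma inO_mul {x y : K F} (hx : InO x) (hy : InO y) : InO (x * y) := by
  rcases eq_or_ne x 0 with rfl | hx0
  · rw [zero_mul]; exact inO_zero
  rcases eq_or_ne y 0 with rfl | hy0
  · rw [mul_zero]; exact inO_zero
  refine inO_of_order_nonneg ?_
  rw [order_mul hx0 hy0]
  have := order_nonneg_of_inO hx hx0
  have := order_nonneg_of_inO hy hy0
  omega

lemma algebraMap_eq (a : F) : algebraMap F (K F) a = HahnSeries.single 0 a := by
  rw [HahnSeries.algebraMap_apply', PowerSeries.algebraMap_apply, Algebra.algebraMap_self,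
    RingHom.id_apply, HahnSeries.ofPowerSeries_C, HahnSeries.C_apply]

lemma order_algebraMap {a : F} (ha : a ≠ 0) : (algebraMap F (K F) a).order = 0 := by
  rw [algebraMap_eq]; exact order_single ha

lemma aeval_coeff (P : F[X]) (i : ℤ) :
    ((Polynomial.aeval (tK F)) P).coeff i = if i ≤ 0 then P.coeff (-i).toNat else 0 := by
  induction P using Polynomial.induction_on' with
  | add p q hp hq =>
    rw [map_add, HahnSeries.coeff_add, hp, hq]
    split <;> simp [Polynomial.coeff_add]
  | monomial n a =>
    rw [Polynomial.aeval_monomial, algebraMap_eq, tK_pow, T, single_mul_single, zero_add, mul_one,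
      HahnSeries.coeff_single, Polynomial.coeff_monomial]
    rcases le_or_gt i 0 with hi | hi
    · simp only [if_pos hi]
      by_cases h : i = -(n : ℤ)
      · rw [if_pos h, if_pos (by omega)]
      · rw [if_neg h, if_neg (by omega)]
    · rw [if_neg (by omega), if_neg (by omega)]

lemma mem_Zsub_iff {x : K F} : x ∈ Zsub F ↔ ∃ P : F[X], (Polynomial.aeval (tK F)) P = x := by
  rw [Zsub, Algebra.adjoin_singleton_eq_range_aeval]; exact Iff.rfl

lemma Zsub_coeff_pos {x : K F} (hx : x ∈ Zsub F) {i : ℤ} (hi : 0 < i) : x.coeff i = 0 := by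
  obtain ⟨P, rfl⟩ := mem_Zsub_iff.mp hx
  rw [aeval_coeff, if_neg (by omega)]

lemma Zsub_order_nonpos {x : K F} (hx : x ∈ Zsub F) (hx0 : x ≠ 0) : x.order ≤ 0 := by
  by_contra h
  exact (mt coeff_order_eq_zero.mp hx0) (Zsub_coeff_pos hx (by omega))

/-- Splitting a Laurent series into polynomial part and fractional part. -/
lemma exists_split (β : K F) :
    ∃ p f : K F, p ∈ Zsub F ∧ (∀ i : ℤ, i ≤ 0 → f.coeff i = 0) ∧ β = p + f := by
  rcases eq_or_ne β 0 with rfl | hβ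
  · exact ⟨0, 0, zero_mem _, fun i _ => rfl, by rw [add_zero]⟩
  set N : ℕ := (-β.order).toNat with hN
  set P : F[X] := ∑ k ∈ Finset.range (N + 1), Polynomial.monomial k (β.coeff (-(k : ℤ))) with hP
  set p : K F := (Polynomial.aeval (tK F)) P with hp
  refine ⟨p, β - p, mem_Zsub_iff.mpr ⟨P, rfl⟩, ?_, by ring⟩
  intro i hi
  have hPc : P.coeff (-i).toNat = β.coeff i := by
    rw [hP, Polynomial.finset_sum_coeff]
    by_cases h : (-i).toNat ≤ N
    · rw [Finset.sum_eq_single ((-i).toNat)]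
      · rw [Polynomial.coeff_monomial, if_pos rfl]
        congr 1; omega
      · intro b _ hb
        rw [Polynomial.coeff_monomial, if_neg hb]
      · intro h'; exact absurd (Finset.mem_range.mpr (by omega)) h'
    · have h1 : β.coeff i = 0 := by
        apply coeff_eq_zero_of_lt_order
        omega
      rw [h1]
      apply Finset.sum_eq_zero
      intro b hb
      have hb' := Finset.mem_range.mp hb
      rw [Polynomial.coeff_monomial, if_neg (by omega)]
  rw [HahnSeries.coeff_sub, hp, aeval_coeff, if_pos hi, hPc, sub_self]
/-! ### Matrix helpers -/

lemma smul_fin_two (c a b d e : K F) :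
    c • (!![a, b; d, e] : Matrix (Fin 2) (Fin 2) (K F)) = !![c*a, c*b; c*d, c*e] := by
  ext i j
  fin_cases i <;> fin_cases j <;> simp [Matrix.smul_apply]

/-- Build a `GL` element from an explicit matrix and inverse. -/
def glMk (M N : Matrix (Fin 2) (Fin 2) (K F)) (h1 : M * N = 1) (h2 : N * M = 1) :
    GL (Fin 2) (K F) := ⟨M, N, h1, h2⟩

@[simp] lemma glMk_val (M N h1 h2) : (glMk (F := F) M N h1 h2).val = M := rfl

def uUp (x : K F) : GL (Fin 2) (K F) :=
  glMk !![1, x; 0, 1] !![1, -x; 0, 1]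
    (by ext i j; fin_cases i <;> fin_cases j <;>
      simp [Matrix.mul_apply, Fin.sum_univ_two, Matrix.one_apply])
    (by ext i j; fin_cases i <;> fin_cases j <;>
      simp [Matrix.mul_apply, Fin.sum_univ_two, Matrix.one_apply])

def uLow (x : K F) : GL (Fin 2) (K F) :=
  glMk !![1, 0; x, 1] !![1, 0; -x, 1]
    (by ext i j; fin_cases i <;> fin_cases j <;>
      simp [Matrix.mul_apply, Fin.sum_univ_two, Matrix.one_apply])
    (by ext i j; fin_cases i <;> fin_cases j <;>
      simp [Matrix.mul_apply, Fin.sum_univ_two, Matrix.one_apply])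

def uSwap (F : Type) [Field F] : GL (Fin 2) (K F) :=
  glMk !![0, 1; 1, 0] !![0, 1; 1, 0]
    (by ext i j; fin_cases i <;> fin_cases j <;>
      simp [Matrix.mul_apply, Fin.sum_univ_two, Matrix.one_apply])
    (by ext i j; fin_cases i <;> fin_cases j <;>
      simp [Matrix.mul_apply, Fin.sum_univ_two, Matrix.one_apply])

def uDiag (x : K F) (hx : x ≠ 0) : GL (Fin 2) (K F) :=
  glMk !![x, 0; 0, 1] !![x⁻¹, 0; 0, 1]
    (by ext i j; fin_cases i <;> fin_cases j <;>
      simp [Matrix.mul_apply, Fin.sum_univ_two, Matrix.one_apply, mul_inv_cancel₀ hx])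
    (by ext i j; fin_cases i <;> fin_cases j <;>
      simp [Matrix.mul_apply, Fin.sum_univ_two, Matrix.one_apply, inv_mul_cancel₀ hx])

/-- An alternative characterization of `InWRep` via orders. -/
lemma inWRep_iff (w : GL (Fin 2) (K F)) :
    InWRep w ↔ (∀ i j, InO (w.val i j)) ∧ w.val.det ≠ 0 ∧ (w.val.det).order = 0 := by
  constructor
  · rintro ⟨h1, h2⟩
    have hd : InO (w.val.det) := by
      rw [Matrix.det_fin_two, sub_eq_add_neg]
      exact inO_add (inO_mul (h1 _ _) (h1 _ _)) (inO_neg (inO_mul (h1 _ _) (h1 _ _)))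
    have hne : w.val.det ≠ 0 := fun h => h2 (by rw [h]; rfl)
    refine ⟨h1, hne, le_antisymm ?_ (order_nonneg_of_inO hd hne)⟩
    exact HahnSeries.order_le_of_coeff_ne_zero h2
  · rintro ⟨h1, h2, h3⟩
    refine ⟨h1, ?_⟩
    have := mt HahnSeries.coeff_order_eq_zero.mp h2
    rwa [h3] at this

lemma inWRep_mul {w w' : GL (Fin 2) (K F)} (hw : InWRep w) (hw' : InWRep w') :
    InWRep (w * w') := by
  rw [inWRep_iff] at hw hw' ⊢
  obtain ⟨h1, h2, h3⟩ := hw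
  obtain ⟨h1', h2', h3'⟩ := hw'
  have hval : (w * w').val = w.val * w'.val := rfl
  refine ⟨?_, ?_, ?_⟩
  · intro i j
    rw [hval, Matrix.mul_apply, Fin.sum_univ_two]
    exact inO_add (inO_mul (h1 _ _) (h1' _ _)) (inO_mul (h1 _ _) (h1' _ _))
  · rw [hval, Matrix.det_mul]
    exact mul_ne_zero h2 h2'
  · rw [hval, Matrix.det_mul, HahnSeries.order_mul h2 h2', h3, h3']; norm_num

lemma inWRep_inv {w : GL (Fin 2) (K F)} (hw : InWRep w) : InWRep w⁻¹ := by
  rw [inWRep_iff] at hw ⊢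
  obtain ⟨h1, h2, h3⟩ := hw
  have hval : (w⁻¹).val = (w.val)⁻¹ := Matrix.coe_units_inv w
  have hdet : ((w⁻¹).val).det = (w.val.det)⁻¹ := by
    rw [hval, Matrix.det_nonsing_inv, Ring.inverse_eq_inv]
  have hio : InO ((w.val.det)⁻¹) :=
    inO_of_order_nonneg (by rw [order_inv h2, h3]; norm_num)
  refine ⟨?_, ?_, ?_⟩
  · intro i j
    rw [hval, Matrix.inv_def, Ring.inverse_eq_inv, Matrix.adjugate_fin_two, Matrix.smul_apply,
      smul_eq_mul]
    refine inO_mul hio ?_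
    fin_cases i <;> fin_cases j
    · exact h1 1 1
    · exact inO_neg (h1 0 1)
    · exact inO_neg (h1 1 0)
    · exact h1 0 0
  · rw [hdet]
    exact inv_ne_zero h2
  · rw [hdet, order_inv h2, h3, neg_zero]

lemma inGammaRep_mul {γ γ' : GL (Fin 2) (K F)} (hγ : InGammaRep γ) (hγ' : InGammaRep γ') :
    InGammaRep (γ * γ') := by
  obtain ⟨h1, c, hc, hdet⟩ := hγ
  obtain ⟨h1', c', hc', hdet'⟩ := hγ'
  have hval : (γ * γ').val = γ.val * γ'.val := rfl
  refine ⟨?_, c * c', mul_ne_zero hc hc', ?_⟩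
  · intro i j
    rw [hval, Matrix.mul_apply, Fin.sum_univ_two]
    exact add_mem (mul_mem (h1 _ _) (h1' _ _)) (mul_mem (h1 _ _) (h1' _ _))
  · rw [hval, Matrix.det_mul, hdet, hdet', map_mul]

lemma inGammaRep_inv {γ : GL (Fin 2) (K F)} (hγ : InGammaRep γ) : InGammaRep γ⁻¹ := by
  obtain ⟨h1, c, hc, hdet⟩ := hγ
  have hval : (γ⁻¹).val = (γ.val)⁻¹ := Matrix.coe_units_inv γ
  have hcK : algebraMap F (K F) c ≠ 0 := by
    rw [algebraMap_eq]; exact HahnSeries.single_ne_zero hc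
  have hinvd : (γ.val.det)⁻¹ = algebraMap F (K F) c⁻¹ := by
    rw [hdet, ← map_inv₀]
  refine ⟨?_, c⁻¹, inv_ne_zero hc, ?_⟩
  · intro i j
    rw [hval, Matrix.inv_def, Ring.inverse_eq_inv, hinvd, Matrix.adjugate_fin_two,
      Matrix.smul_apply, smul_eq_mul]
    refine mul_mem (Subalgebra.algebraMap_mem _ _) ?_
    fin_cases i <;> fin_cases j
    · exact h1 1 1
    · exact neg_mem (h1 0 1)
    · exact neg_mem (h1 1 0)
    · exact h1 0 0
  · rw [hval, Matrix.det_nonsing_inv, Ring.inverse_eq_inv, hinvd]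

lemma inWRep_uUp {x : K F} (hx : InO x) : InWRep (uUp x) := by
  rw [inWRep_iff]
  have hdet : (uUp x).val.det = 1 := by
    rw [uUp, glMk_val, Matrix.det_fin_two_of]; ring
  refine ⟨?_, by rw [hdet]; exact one_ne_zero, by rw [hdet, HahnSeries.order_one]⟩
  intro i j; fin_cases i <;> fin_cases j
  · exact inO_one
  · exact hx
  · exact inO_zero
  · exact inO_one

lemma inWRep_uLow {x : K F} (hx : InO x) : InWRep (uLow x) := by
  rw [inWRep_iff]
  have hdet : (uLow x).val.det = 1 := by
    rw [uLow, glMk_val, Matrix.det_fin_two_of]; ring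
  refine ⟨?_, by rw [hdet]; exact one_ne_zero, by rw [hdet, HahnSeries.order_one]⟩
  intro i j; fin_cases i <;> fin_cases j
  · exact inO_one
  · exact inO_zero
  · exact hx
  · exact inO_one

lemma inWRep_uSwap : InWRep (uSwap F) := by
  rw [inWRep_iff]
  have hdet : (uSwap F).val.det = -1 := by
    rw [uSwap, glMk_val, Matrix.det_fin_two_of]; ring
  refine ⟨?_, by rw [hdet]; exact neg_ne_zero.mpr one_ne_zero, ?_⟩
  · intro i j; fin_cases i <;> fin_cases j
    · exact inO_zero
    · exact inO_one
    · exact inO_one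
    · exact inO_zero
  · rw [hdet]
    rw [show (-1 : K F) = HahnSeries.single 0 (-1 : F) by
      rw [← algebraMap_eq, map_neg, map_one]]
    exact HahnSeries.order_single (neg_ne_zero.mpr one_ne_zero)

lemma inWRep_uDiag {x : K F} (hx0 : x ≠ 0) (hx : x.order = 0) : InWRep (uDiag x hx0) := by
  rw [inWRep_iff]
  have hdet : (uDiag x hx0).val.det = x := by
    rw [uDiag, glMk_val, Matrix.det_fin_two_of]; ring
  refine ⟨?_, by rw [hdet]; exact hx0, by rw [hdet, hx]⟩
  intro i j; fin_cases i <;> fin_cases j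
  · exact inO_of_order_nonneg (le_of_eq hx.symm)
  · exact inO_zero
  · exact inO_zero
  · exact inO_one

lemma inGammaRep_uUp {x : K F} (hx : x ∈ Zsub F) : InGammaRep (uUp x) := by
  have hdet : (uUp x).val.det = 1 := by
    rw [uUp, glMk_val, Matrix.det_fin_two_of]; ring
  refine ⟨?_, 1, one_ne_zero, by rw [hdet, map_one]⟩
  intro i j; fin_cases i <;> fin_cases j
  · exact one_mem _
  · exact hx
  · exact zero_mem _
  · exact one_mem _

lemma inGammaRep_uSwap : InGammaRep (uSwap F) := by
  have hdet : (uSwap F).val.det = -1 := by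
    rw [uSwap, glMk_val, Matrix.det_fin_two_of]; ring
  refine ⟨?_, -1, neg_ne_zero.mpr one_ne_zero, by rw [hdet, map_neg, map_one]⟩
  intro i j; fin_cases i <;> fin_cases j
  · exact zero_mem _
  · exact one_mem _
  · exact one_mem _
  · exact zero_mem _

lemma inGammaRep_one : InGammaRep (1 : GL (Fin 2) (K F)) := by
  have hone : (1 : GL (Fin 2) (K F)).val = (1 : Matrix (Fin 2) (Fin 2) (K F)) := rfl
  refine ⟨?_, 1, one_ne_zero, by rw [hone, Matrix.det_one, map_one]⟩
  intro i j
  rw [hone]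
  by_cases h : i = j
  · rw [h, Matrix.one_apply_eq]; exact one_mem _
  · rw [Matrix.one_apply_ne h]; exact zero_mem _
lemma neg_one_ne_zero' : (-1 : K F) ≠ 0 := neg_ne_zero.mpr one_ne_zero

lemma order_neg_one : (-1 : K F).order = 0 := by
  rw [HahnSeries.order_neg, HahnSeries.order_one]

/-! ### The double coset predicate and combinators -/

def Dmat (F : Type) [Field F] (i : ℕ) : Matrix (Fin 2) (Fin 2) (K F) := !![tK F ^ i, 0; 0, 1]

lemma Dmat_eq (i : ℕ) : Dmat F i = !![T F i, 0; 0, 1] := by rw [Dmat, tK_pow]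

/-- `M` lies in one of the double cosets. -/
def ExD (M : Matrix (Fin 2) (Fin 2) (K F)) : Prop :=
  ∃ (i : ℕ) (γ w : GL (Fin 2) (K F)) (c : (K F)ˣ), InGammaRep γ ∧ InWRep w ∧
    M = (c : K F) • (γ.val * Dmat F i * w.val)

lemma mat_mul_smul (x : K F) (A B : Matrix (Fin 2) (Fin 2) (K F)) :
    A * (x • B) = x • (A * B) := by
  ext i j
  simp only [Matrix.mul_apply, Matrix.smul_apply, Fin.sum_univ_two, smul_eq_mul]
  ring

lemma mat_smul_mul (x : K F) (A B : Matrix (Fin 2) (Fin 2) (K F)) :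
    (x • A) * B = x • (A * B) := by
  ext i j
  simp only [Matrix.mul_apply, Matrix.smul_apply, Fin.sum_univ_two, smul_eq_mul]
  ring

lemma mat_smul_smul (x y : K F) (A : Matrix (Fin 2) (Fin 2) (K F)) :
    x • (y • A) = (x * y) • A := by
  ext i j
  simp only [Matrix.smul_apply, smul_eq_mul]
  ring

lemma ExD.lmul {M : Matrix (Fin 2) (Fin 2) (K F)} (h : ExD M) (γ0 : GL (Fin 2) (K F))
    (h0 : InGammaRep γ0) : ExD (γ0.val * M) := by
  obtain ⟨i, γ, w, c, hγ, hw, hM⟩ := h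
  refine ⟨i, γ0 * γ, w, c, inGammaRep_mul h0 hγ, hw, ?_⟩
  rw [hM, mat_mul_smul, Units.val_mul, ← mul_assoc, ← mul_assoc]

lemma ExD.rmul {M : Matrix (Fin 2) (Fin 2) (K F)} (h : ExD M) (w0 : GL (Fin 2) (K F))
    (h0 : InWRep w0) : ExD (M * w0.val) := by
  obtain ⟨i, γ, w, c, hγ, hw, hM⟩ := h
  refine ⟨i, γ, w * w0, c, hγ, inWRep_mul hw h0, ?_⟩
  rw [hM, mat_smul_mul, Units.val_mul, mul_assoc (γ.val * Dmat F i) w.val w0.val]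

lemma ExD.smul {M : Matrix (Fin 2) (Fin 2) (K F)} (h : ExD M) (x : K F) (hx : x ≠ 0) :
    ExD (x • M) := by
  obtain ⟨i, γ, w, c, hγ, hw, hM⟩ := h
  refine ⟨i, γ, w, Units.mk0 x hx * c, hγ, hw, ?_⟩
  rw [hM, mat_smul_smul, Units.val_mul, Units.val_mk0]

lemma ExD.congr {M M' : Matrix (Fin 2) (Fin 2) (K F)} (h : ExD M') (he : M = M') : ExD M :=
  he ▸ h

lemma mk_eq {a b c d a' b' c' d' : K F} (h1 : a = a') (h2 : b = b') (h3 : c = c')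
    (h4 : d = d') : !![a,b;c,d] = !![a',b';c',d'] := by rw [h1, h2, h3, h4]

lemma frac_order {f : K F} (hf : ∀ i : ℤ, i ≤ 0 → f.coeff i = 0) (h0 : f ≠ 0) :
    1 ≤ f.order := by
  by_contra h
  exact (mt HahnSeries.coeff_order_eq_zero.mp h0) (hf _ (by omega))

/-- The core reduction: every matrix `!![tⁿ, f; 0, 1]` with `f` fractional lies in a
double coset. -/
lemma core (k : ℕ) : ∀ (n : ℤ) (f : K F), (-n).toNat ≤ k →
    (∀ i : ℤ, i ≤ 0 → f.coeff i = 0) → ExD !![T F n, f; 0, 1] := by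
  induction k using Nat.strong_induction_on with
  | _ k IH =>
  intro n f hk hf
  rcases le_or_gt 0 n with hn | hn
  · -- base case `n ≥ 0`
    have hio : InO (T F (-n) * f) := by
      rcases eq_or_ne f 0 with rfl | hf0
      · rw [mul_zero]; exact inO_zero
      · refine inO_of_order_nonneg ?_
        rw [HahnSeries.order_mul (T_ne_zero _) hf0, order_T]
        have := frac_order hf hf0
        omega
    have hTx : T F n * (T F (-n) * f) = f := by
      rw [← mul_assoc, T_mul_T_neg, one_mul]
    refine ⟨n.toNat, 1, uUp (T F (-n) * f), 1, inGammaRep_one, inWRep_uUp hio, ?_⟩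
    have h1 : ((1 : GL (Fin 2) (K F)) : Matrix (Fin 2) (Fin 2) (K F)) = 1 := rfl
    have hcast : ((n.toNat : ℤ)) = n := Int.toNat_of_nonneg hn
    simp only [Units.val_one, one_smul, h1, one_mul, Dmat_eq, hcast, uUp, glMk_val]
    rw [Matrix.mul_fin_two]
    refine mk_eq ?_ ?_ ?_ ?_
    · ring
    · linear_combination -hTx
    · ring
    · ring
  · -- n < 0
    by_cases hbig : f = 0 ∨ -n ≤ f.order
    · -- terminal case: i = -n
      have hcast : (((-n).toNat : ℤ)) = -n := Int.toNat_of_nonneg (by omega)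
      have hio : InO (T F (-n) * f) := by
        rcases eq_or_ne f 0 with rfl | hf0
        · rw [mul_zero]; exact inO_zero
        · have ho : -n ≤ f.order := hbig.resolve_left hf0
          refine inO_of_order_nonneg ?_
          rw [HahnSeries.order_mul (T_ne_zero _) hf0, order_T]
          omega
      have hTx : T F n * (T F (-n) * f) = f := by
        rw [← mul_assoc, T_mul_T_neg, one_mul]
      have hTm : T F n * T F (-n) = 1 := T_mul_T_neg n
      refine ⟨(-n).toNat, uSwap F,
        glMk !![0, 1; 1, T F (-n) * f] !![-(T F (-n) * f), 1; 1, 0]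
          (by ext i j; fin_cases i <;> fin_cases j <;>
            simp [Matrix.mul_apply, Fin.sum_univ_two, Matrix.one_apply])
          (by ext i j; fin_cases i <;> fin_cases j <;>
            simp [Matrix.mul_apply, Fin.sum_univ_two, Matrix.one_apply]),
        Units.mk (T F n) (T F (-n)) (T_mul_T_neg n)
          (by rw [T_mul, neg_add_cancel, T_zero]),
        inGammaRep_uSwap, ?_, ?_⟩
      · rw [inWRep_iff]
        have hdet : (glMk !![0, 1; 1, T F (-n) * f] !![-(T F (-n) * f), 1; 1, 0]
            (by ext i j; fin_cases i <;> fin_cases j <;>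
              simp [Matrix.mul_apply, Fin.sum_univ_two, Matrix.one_apply])
            (by ext i j; fin_cases i <;> fin_cases j <;>
              simp [Matrix.mul_apply, Fin.sum_univ_two, Matrix.one_apply])).val.det
            = -1 := by
          rw [glMk_val, Matrix.det_fin_two_of]; ring
        refine ⟨?_, by rw [hdet]; exact neg_one_ne_zero', by rw [hdet, order_neg_one]⟩
        intro i j; fin_cases i <;> fin_cases j
        · exact inO_zero
        · exact inO_one
        · exact inO_one
        · exact hio
      · simp only [Dmat_eq, uSwap, glMk_val, Units.val_mk]
        rw [hcast, Matrix.mul_fin_two, Matrix.mul_fin_two, smul_fin_two]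
        refine mk_eq ?_ ?_ ?_ ?_
        · ring
        · linear_combination -hTx
        · ring
        · linear_combination -hTm
    · -- recursive case
      push_neg at hbig
      obtain ⟨hf0, hord⟩ := hbig
      have hfi : f⁻¹ ≠ 0 := inv_ne_zero hf0
      have hmo1 : 1 ≤ f.order := frac_order hf hf0
      have hff : f * f⁻¹ = 1 := mul_inv_cancel₀ hf0
      set n' : ℤ := n + 2 * f.order with hn'
      have hα'0 : (-(T F n * f⁻¹ * f⁻¹) : K F) ≠ 0 :=
        neg_ne_zero.mpr (mul_ne_zero (mul_ne_zero (T_ne_zero n) hfi) hfi)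
      have hordα' : (-(T F n * f⁻¹ * f⁻¹) : K F).order = -n' := by
        rw [HahnSeries.order_neg, HahnSeries.order_mul (mul_ne_zero (T_ne_zero n) hfi) hfi,
          HahnSeries.order_mul (T_ne_zero n) hfi, order_T, order_inv hf0]
        omega
      have hε0 : (T F (-n') * -(T F n * f⁻¹ * f⁻¹) : K F) ≠ 0 :=
        mul_ne_zero (T_ne_zero _) hα'0
      have hordε : (T F (-n') * -(T F n * f⁻¹ * f⁻¹) : K F).order = 0 := by
        rw [HahnSeries.order_mul (T_ne_zero _) hα'0, order_T, hordα']
        omega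
      have hioTf : InO (T F n * f⁻¹) := by
        refine inO_of_order_nonneg ?_
        rw [HahnSeries.order_mul (T_ne_zero n) hfi, order_T, order_inv hf0]
        omega
      obtain ⟨p', f'', hp', hf'', hsplit⟩ := exists_split f⁻¹
      have hlt : (-n').toNat < k := by omega
      have hrec : ExD !![T F n', f''; 0, 1] := IH _ hlt n' f'' le_rfl hf''
      have hTα : T F n' * (T F (-n') * -(T F n * f⁻¹ * f⁻¹)) = -(T F n * f⁻¹ * f⁻¹) := by
        rw [← mul_assoc, T_mul_T_neg, one_mul]
      refine ExD.congr (((((hrec.lmul (uUp p') (inGammaRep_uUp hp')).lmul (uSwap F)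
        inGammaRep_uSwap).rmul (uDiag _ hε0) (inWRep_uDiag hε0 hordε)).rmul
        (uLow (T F n * f⁻¹)) (inWRep_uLow hioTf)).smul f hf0) ?_
      simp only [uSwap, uUp, uDiag, uLow, glMk_val]
      rw [Matrix.mul_fin_two, Matrix.mul_fin_two, Matrix.mul_fin_two, Matrix.mul_fin_two,
        smul_fin_two]
      refine mk_eq ?_ ?_ ?_ ?_
      · linear_combination (-(T F n)) * hff
      · ring
      · linear_combination (-f) * hTα + (f * T F n * f⁻¹) * hsplit
      · linear_combination (-1 : K F) * hff + f * hsplit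
/-! ### Iwasawa decomposition -/

lemma uLow_val_mul (y z : K F) (h : z = -y) : (uLow y).val * (uLow z).val = 1 := by
  subst h
  simp only [uLow, glMk_val]
  ext i j; fin_cases i <;> fin_cases j <;>
    simp [Matrix.mul_apply, Fin.sum_univ_two, Matrix.one_apply]

lemma uSwap_val_mul : (uSwap F).val * (uSwap F).val = 1 := by
  simp only [uSwap, glMk_val]
  ext i j; fin_cases i <;> fin_cases j <;>
    simp [Matrix.mul_apply, Fin.sum_univ_two, Matrix.one_apply]

lemma tri {a b s : K F} (ha : a ≠ 0) (hs : s ≠ 0) :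
    ∃ (n : ℤ) (β : K F) (w : GL (Fin 2) (K F)), InWRep w ∧
      !![a, b; 0, s] = s • (!![T F n, β; 0, 1] * w.val) := by
  have hα : a * s⁻¹ ≠ 0 := mul_ne_zero ha (inv_ne_zero hs)
  set n := -(a * s⁻¹).order with hn
  have hε0 : T F (-n) * (a * s⁻¹) ≠ 0 := mul_ne_zero (T_ne_zero _) hα
  have hεord : (T F (-n) * (a * s⁻¹)).order = 0 := by
    rw [HahnSeries.order_mul (T_ne_zero _) hα, order_T]
    omega
  refine ⟨n, b * s⁻¹, uDiag _ hε0, inWRep_uDiag hε0 hεord, ?_⟩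
  have hss : s * s⁻¹ = 1 := mul_inv_cancel₀ hs
  have hT : T F n * (T F (-n) * (a * s⁻¹)) = a * s⁻¹ := by
    rw [← mul_assoc, T_mul_T_neg, one_mul]
  simp only [uDiag, glMk_val]
  rw [Matrix.mul_fin_two, smul_fin_two]
  refine mk_eq ?_ ?_ ?_ ?_
  · linear_combination (-a) * hss + (-s) * hT
  · linear_combination (-b) * hss
  · ring
  · ring

lemma iwasawa (g : GL (Fin 2) (K F)) :
    ∃ (n : ℤ) (β : K F) (w : GL (Fin 2) (K F)) (c : (K F)ˣ), InWRep w ∧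
      g.val = (c : K F) • (!![T F n, β; 0, 1] * w.val) := by
  have hdet : g.val.det ≠ 0 :=
    isUnit_iff_ne_zero.mp ((Matrix.isUnit_iff_isUnit_det g.val).mp (Units.isUnit g))
  set a := g.val 0 0 with hadf
  set b := g.val 0 1 with hbdf
  set r := g.val 1 0 with hrdf
  set s := g.val 1 1 with hsdf
  have hdet2 : a * s - b * r ≠ 0 := by
    rw [hadf, hsdf, hbdf, hrdf, ← Matrix.det_fin_two]; exact hdet
  have heta : g.val = !![a, b; r, s] := Matrix.eta_fin_two g.val
  by_cases hcase : s ≠ 0 ∧ (r = 0 ∨ s.order ≤ r.order)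
  · obtain ⟨hs, hro⟩ := hcase
    have hss : s * s⁻¹ = 1 := mul_inv_cancel₀ hs
    have hx : InO (r * s⁻¹) := by
      rcases eq_or_ne r 0 with hr0 | hrne
      · rw [hr0, zero_mul]; exact inO_zero
      · have hord : s.order ≤ r.order := hro.resolve_left hrne
        refine inO_of_order_nonneg ?_
        rw [HahnSeries.order_mul hrne (inv_ne_zero hs), order_inv hs]
        omega
    have hMval : g.val * (uLow (-(r * s⁻¹))).val = !![a - b * (r * s⁻¹), b; 0, s] := by
      rw [heta]; simp only [uLow, glMk_val]
      rw [Matrix.mul_fin_two]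
      refine mk_eq ?_ ?_ ?_ ?_
      · ring
      · ring
      · linear_combination (-r) * hss
      · ring
    have ha' : a - b * (r * s⁻¹) ≠ 0 := by
      have hdu : (uLow (-(r * s⁻¹))).val.det = 1 := by
        simp only [uLow, glMk_val]; rw [Matrix.det_fin_two_of]; ring
      have hd : (g.val * (uLow (-(r * s⁻¹))).val).det ≠ 0 := by
        rw [Matrix.det_mul, hdu, mul_one]; exact hdet
      rw [hMval, Matrix.det_fin_two_of] at hd
      intro h0; apply hd; rw [h0]; ring
    obtain ⟨n, β, w1, hw1, htri⟩ := tri ha' hs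
    refine ⟨n, β, w1 * uLow (r * s⁻¹), Units.mk0 s hs,
      inWRep_mul hw1 (inWRep_uLow hx), ?_⟩
    have hre : g.val = (g.val * (uLow (-(r * s⁻¹))).val) * (uLow (r * s⁻¹)).val := by
      rw [mul_assoc, uLow_val_mul _ _ (neg_neg _).symm, mul_one]
    rw [hre, hMval, htri, Units.val_mk0]
    simp only [Units.val_mul, mat_smul_mul, mul_assoc]
  · push_neg at hcase
    have hr : r ≠ 0 := by
      by_cases hs : s = 0
      · intro h0; apply hdet2; rw [hs, h0]; ring
      · exact (hcase hs).1
    have hrr : r * r⁻¹ = 1 := mul_inv_cancel₀ hr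
    have hy : InO (s * r⁻¹) := by
      by_cases hs : s = 0
      · rw [hs, zero_mul]; exact inO_zero
      · refine inO_of_order_nonneg ?_
        rw [HahnSeries.order_mul hs (inv_ne_zero hr), order_inv hr]
        have := (hcase hs).2
        omega
    have hMval : g.val * (uSwap F).val * (uLow (-(s * r⁻¹))).val
        = !![b - a * (s * r⁻¹), a; 0, r] := by
      rw [heta]; simp only [uSwap, uLow, glMk_val]
      rw [Matrix.mul_fin_two, Matrix.mul_fin_two]
      refine mk_eq ?_ ?_ ?_ ?_
      · ring
      · ring
      · linear_combination (-s) * hrr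
      · ring
    have ha' : b - a * (s * r⁻¹) ≠ 0 := by
      have hdu : (uLow (-(s * r⁻¹))).val.det = 1 := by
        simp only [uLow, glMk_val]; rw [Matrix.det_fin_two_of]; ring
      have hdsw : (uSwap F).val.det = -1 := by
        simp only [uSwap, glMk_val]; rw [Matrix.det_fin_two_of]; ring
      have hd : (g.val * (uSwap F).val * (uLow (-(s * r⁻¹))).val).det ≠ 0 := by
        rw [Matrix.det_mul, Matrix.det_mul, hdu, hdsw, mul_one]
        exact mul_ne_zero hdet neg_one_ne_zero'
      rw [hMval, Matrix.det_fin_two_of] at hd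
      intro h0; apply hd; rw [h0]; ring
    obtain ⟨n, β, w1, hw1, htri⟩ := tri ha' hr
    refine ⟨n, β, w1 * uLow (s * r⁻¹) * uSwap F, Units.mk0 r hr,
      inWRep_mul (inWRep_mul hw1 (inWRep_uLow hy)) inWRep_uSwap, ?_⟩
    have hre : g.val = ((g.val * (uSwap F).val * (uLow (-(s * r⁻¹))).val)
        * (uLow (s * r⁻¹)).val) * (uSwap F).val := by
      rw [mul_assoc (g.val * (uSwap F).val), uLow_val_mul _ _ (neg_neg _).symm, mul_one,
        mul_assoc, uSwap_val_mul, mul_one]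
    rw [hre, hMval, htri, Units.val_mk0]
    simp only [Units.val_mul, mat_smul_mul, mul_assoc]

/-! ### Existence -/

lemma exD_glval (g : GL (Fin 2) (K F)) : ExD g.val := by
  obtain ⟨n, β, w, c, hw, heq⟩ := iwasawa g
  obtain ⟨p, f, hp, hf, hsplit⟩ := exists_split β
  have hmat : !![T F n, β; 0, 1] = (uUp p).val * !![T F n, f; 0, 1] := by
    simp only [uUp, glMk_val]
    rw [Matrix.mul_fin_two]
    refine mk_eq ?_ ?_ ?_ ?_
    · ring
    · linear_combination hsplit
    · ring
    · ring
  have hcore : ExD !![T F n, f; 0, 1] := core ((-n).toNat) n f le_rfl hf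
  have h1 : ExD !![T F n, β; 0, 1] :=
    (hcore.lmul (uUp p) (inGammaRep_uUp hp)).congr hmat
  have h2 : ExD (!![T F n, β; 0, 1] * w.val) := h1.rmul w hw
  exact (h2.smul (c : K F) (Units.ne_zero c)).congr heq

/-! ### Uniqueness -/

lemma key' {i j : ℕ} (hji : j < i) {γ w : GL (Fin 2) (K F)} {e : (K F)ˣ}
    (hγ : InGammaRep γ) (hw : InWRep w)
    (heq : γ.val * Dmat F i = (e : K F) • (Dmat F j * w.val)) : False := by
  obtain ⟨hγ1, cst, hcst, hdetγ⟩ := hγ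
  rw [inWRep_iff] at hw
  obtain ⟨hw1, hwdet, hword⟩ := hw
  have he0 : (e : K F) ≠ 0 := Units.ne_zero e
  have hcstK : algebraMap F (K F) cst ≠ 0 := by
    rw [algebraMap_eq]; exact HahnSeries.single_ne_zero hcst
  have hDdet : ∀ m : ℕ, (Dmat F m).det = T F m := by
    intro m; rw [Dmat_eq, Matrix.det_fin_two_of]; ring
  have hdet := congrArg Matrix.det heq
  rw [Matrix.det_mul, Matrix.det_smul, Matrix.det_mul, hDdet, hDdet, hdetγ,
    Fintype.card_fin] at hdet
  have horddet := congrArg HahnSeries.order hdet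
  have heord : (((e : K F)) ^ 2 * (T F j * w.val.det)).order
      = 2 * ((e : K F)).order + (-(j : ℤ) + w.val.det.order) := by
    rw [HahnSeries.order_mul (pow_ne_zero 2 he0) (mul_ne_zero (T_ne_zero _) hwdet),
      HahnSeries.order_mul (T_ne_zero _) hwdet, order_T]
    congr 1
    rw [sq, HahnSeries.order_mul he0 he0]
    ring
  rw [HahnSeries.order_mul hcstK (T_ne_zero _), order_T, order_algebraMap hcst, heord,
    hword] at horddet
  have hD00 : ∀ m : ℕ, Dmat F m 0 0 = T F m := fun m => by rw [Dmat_eq]; rfl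
  have hD01 : ∀ m : ℕ, Dmat F m 0 1 = 0 := fun m => by rw [Dmat_eq]; rfl
  have hD10 : ∀ m : ℕ, Dmat F m 1 0 = 0 := fun m => by rw [Dmat_eq]; rfl
  have hD11 : ∀ m : ℕ, Dmat F m 1 1 = 1 := fun m => by rw [Dmat_eq]; rfl
  have E00 := congrFun (congrFun heq 0) 0
  have E10 := congrFun (congrFun heq 1) 0
  simp only [Matrix.mul_apply, Fin.sum_univ_two, Matrix.smul_apply, smul_eq_mul,
    hD00, hD01, hD10, hD11, mul_zero, zero_mul,
    add_zero, zero_add, mul_one, one_mul] at E00 E10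
  by_cases hp : γ.val 0 0 = 0
  · have hr : γ.val 1 0 ≠ 0 := by
      intro h0
      apply hcstK
      rw [← hdetγ, Matrix.det_fin_two, hp, h0]
      ring
    have hw10 : w.val 1 0 ≠ 0 := by
      intro h0
      rw [h0, mul_zero] at E10
      exact mul_ne_zero hr (T_ne_zero _) E10
    have hE := congrArg HahnSeries.order E10
    rw [HahnSeries.order_mul hr (T_ne_zero _), order_T,
      HahnSeries.order_mul he0 hw10] at hE
    have hordr : (γ.val 1 0).order ≤ 0 := Zsub_order_nonpos (hγ1 1 0) hr
    have hordw : 0 ≤ (w.val 1 0).order := order_nonneg_of_inO (hw1 1 0) hw10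
    omega
  · have hw00 : w.val 0 0 ≠ 0 := by
      intro h0
      rw [h0, mul_zero, mul_zero] at E00
      exact mul_ne_zero hp (T_ne_zero _) E00
    have hE := congrArg HahnSeries.order E00
    rw [HahnSeries.order_mul hp (T_ne_zero _), order_T,
      HahnSeries.order_mul he0 (mul_ne_zero (T_ne_zero _) hw00),
      HahnSeries.order_mul (T_ne_zero _) hw00, order_T] at hE
    have hordp : (γ.val 0 0).order ≤ 0 := Zsub_order_nonpos (hγ1 0 0) hp
    have hordw : 0 ≤ (w.val 0 0).order := order_nonneg_of_inO (hw1 0 0) hw00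
    omega

lemma key {i j : ℕ} {γ w : GL (Fin 2) (K F)} {e : (K F)ˣ}
    (hγ : InGammaRep γ) (hw : InWRep w)
    (heq : γ.val * Dmat F i = (e : K F) • (Dmat F j * w.val)) : i = j := by
  rcases lt_trichotomy i j with h | h | h
  · exfalso
    have hγi : (γ⁻¹).val * γ.val = 1 := by
      rw [← Units.val_mul, inv_mul_cancel, Units.val_one]
    have hwi : w.val * (w⁻¹).val = 1 := by
      rw [← Units.val_mul, mul_inv_cancel, Units.val_one]
    have h1 : Dmat F i = (e : K F) • ((γ⁻¹).val * Dmat F j * w.val) := by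
      calc Dmat F i = (γ⁻¹).val * (γ.val * Dmat F i) := by
            rw [← mul_assoc, hγi, one_mul]
        _ = (γ⁻¹).val * ((e : K F) • (Dmat F j * w.val)) := by rw [heq]
        _ = (e : K F) • ((γ⁻¹).val * Dmat F j * w.val) := by
            rw [mat_mul_smul, ← mul_assoc]
    have h2 : Dmat F i * (w⁻¹).val = (e : K F) • ((γ⁻¹).val * Dmat F j) := by
      rw [h1, mat_smul_mul, mul_assoc, hwi, mul_one]
    have h3 : (γ⁻¹).val * Dmat F j
        = ((e⁻¹ : (K F)ˣ) : K F) • (Dmat F i * (w⁻¹).val) := by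
      rw [h2, mat_smul_smul,
        show ((e⁻¹ : (K F)ˣ) : K F) * ((e : K F)) = 1 by
          rw [← Units.val_mul, inv_mul_cancel, Units.val_one],
        one_smul]
    exact key' h (inGammaRep_inv hγ) (inWRep_inv hw) h3
  · exact h
  · exact (key' h hγ hw heq).elim

/-! ### Main statement -/

lemma main (g : GL (Fin 2) (K F)) :
    ∃! i : ℕ, ∃ (γ w : GL (Fin 2) (K F)) (c : (K F)ˣ),
      InGammaRep γ ∧ InWRep w ∧
      g.val = (c : K F) • (γ.val * !![(tK F) ^ i, 0; 0, 1] * w.val) := by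
  obtain ⟨i, γ, w, c, hγ, hw, heq⟩ := exD_glval g
  refine ⟨i, ⟨γ, w, c, hγ, hw, heq⟩, ?_⟩
  rintro j ⟨γ', w', c', hγ', hw', heq'⟩
  have heqD : g.val = (c' : K F) • (γ'.val * Dmat F j * w'.val) := heq'
  have hE : (c : K F) • (γ.val * Dmat F i * w.val)
      = (c' : K F) • (γ'.val * Dmat F j * w'.val) := by rw [← heq, ← heqD]
  have hγ'i : (γ'⁻¹).val * γ'.val = 1 := by
    rw [← Units.val_mul, inv_mul_cancel, Units.val_one]
  have hwi : w.val * (w⁻¹).val = 1 := by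
    rw [← Units.val_mul, mul_inv_cancel, Units.val_one]
  have step : (γ'⁻¹).val * ((c : K F) • (γ.val * Dmat F i * w.val)) * (w⁻¹).val
      = (γ'⁻¹).val * ((c' : K F) • (γ'.val * Dmat F j * w'.val)) * (w⁻¹).val := by
    rw [hE]
  rw [mat_mul_smul, mat_smul_mul, mat_mul_smul, mat_smul_mul] at step
  have lhs1 : (γ'⁻¹).val * (γ.val * Dmat F i * w.val) * (w⁻¹).val
      = (γ'⁻¹ * γ).val * Dmat F i := by
    rw [← mul_assoc ((γ'⁻¹).val) (γ.val * Dmat F i) w.val,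
      mul_assoc _ w.val ((w⁻¹).val), hwi, mul_one, ← mul_assoc, Units.val_mul]
  have rhs1 : (γ'⁻¹).val * (γ'.val * Dmat F j * w'.val) * (w⁻¹).val
      = Dmat F j * (w' * w⁻¹).val := by
    rw [← mul_assoc ((γ'⁻¹).val) (γ'.val * Dmat F j) w'.val,
      ← mul_assoc ((γ'⁻¹).val) γ'.val (Dmat F j), hγ'i, one_mul, mul_assoc, Units.val_mul]
  rw [lhs1, rhs1] at step
  have hcinv : ((c⁻¹ : (K F)ˣ) : K F) * (c : K F) = 1 := by
    rw [← Units.val_mul, inv_mul_cancel, Units.val_one]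
  have final : (γ'⁻¹ * γ).val * Dmat F i
      = ((c⁻¹ * c' : (K F)ˣ) : K F) • (Dmat F j * (w' * w⁻¹).val) := by
    have h2 := congrArg (fun M => ((c⁻¹ : (K F)ˣ) : K F) • M) step
    rw [mat_smul_smul, mat_smul_smul, hcinv, one_smul] at h2
    rw [h2]
    simp only [Units.val_mul]
  exact (key (inGammaRep_mul (inGammaRep_inv hγ') hγ)
    (inWRep_mul hw' (inWRep_inv hw)) final).symm
end CartanAux
end CartanAux
/-- `G = PGL(2,K)` is the disjoint union over `i ≥ 0` of the double
cosets `Γ · diag(tⁱ,1) · W`: every `g` lies in exactly one of them (equality in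
`PGL` is equality of `GL` representatives up to a scalar). -/
theorem cartan_double_coset_decomposition (F : Type) [Field F] [Fintype F]
    (g : GL (Fin 2) (K F)) :
    ∃! i : ℕ, ∃ (γ w : GL (Fin 2) (K F)) (c : (K F)ˣ),
      InGammaRep γ ∧ InWRep w ∧
      g.val = (c : K F) • (γ.val * !![(tK F) ^ i, 0; 0, 1] * w.val) := by
  exact CartanAux.main g
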